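/- With Y a polyhedron {y : aᵢ·y ≤ bᵢ, i=1,…,m} and y₀ strictly interior, the α-projection map s ↦ α*(s)·s + (1-α*(s))·y₀, where α*(s) = min(1, minᵢ bounds as above), is continuous on ℝⁿ. -/

import Mathlib

/-- Continuity of the α-projection map for a polytope with strictly interior
base point. -/
theorem alpha_projection_continuous
    {n m : ℕ} (a : Fin m → Fin n → ℝ) (b : Fin m → ℝ)
    (y₀ : Fin n → ℝ) (hy₀ : ∀ i, ∑ j, a i j * y₀ j < b i)
    (αstar : (Fin n → ℝ) → ℝ)
    (hα : ∀ s, αstar s = sInf (insert (1:ℝ)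
      ((fun i => (b i - ∑ j, a i j * y₀ j) /
          ((∑ j, a i j * s j) - ∑ j, a i j * y₀ j)) ''
        {i : Fin m | ∑ j, a i j * y₀ j < ∑ j, a i j * s j}))) :
    Continuous (fun s => αstar s • s + (1 - αstar s) • y₀) := by
  set c : Fin m → ℝ := fun i => b i - ∑ j, a i j * y₀ j with hc_def
  have hc : ∀ i, 0 < c i := fun i => sub_pos.2 (hy₀ i)
  set d : (Fin n → ℝ) → Fin m → ℝ :=
    fun s i => (∑ j, a i j * s j) - ∑ j, a i j * y₀ j with hd_def
  set g : Fin (m+1) → (Fin n → ℝ) → ℝ :=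
    fun k => Fin.cases (fun _ => (1:ℝ)) (fun i s => c i / max (d s i) (c i)) k with hg_def
  have hne : (Finset.univ : Finset (Fin (m+1))).Nonempty := ⟨0, Finset.mem_univ 0⟩
  -- Key: αstar equals a finite inf of continuous functions
  have key : ∀ s, αstar s = Finset.univ.inf' hne (fun k => g k s) := by
    intro s
    rw [hα s]
    set A : Set ℝ := insert (1:ℝ)
      ((fun i => c i / (d s i)) '' {i : Fin m | 0 < d s i}) with hA_def
    have hAeq : (insert (1:ℝ)
        ((fun i => (b i - ∑ j, a i j * y₀ j) /
            ((∑ j, a i j * s j) - ∑ j, a i j * y₀ j)) ''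
          {i : Fin m | ∑ j, a i j * y₀ j < ∑ j, a i j * s j})) = A := by
      rw [hA_def]
      congr 1
      · ext i; simp [hd_def, hc_def, sub_pos]
    rw [hAeq]
    have hAfin : A.Finite := (Set.toFinite _).insert 1
    have hAbdd : BddBelow A := hAfin.bddBelow
    have hAne : A.Nonempty := ⟨1, Set.mem_insert _ _⟩
    apply le_antisymm
    · apply Finset.le_inf'
      intro k _
      induction k using Fin.cases with
      | zero => exact csInf_le hAbdd (Set.mem_insert _ _)
      | succ i =>
        rcases le_total (d s i) (c i) with h | h
        · have : g i.succ s = 1 := by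
            simp only [hg_def, Fin.cases_succ, max_eq_right h, div_self (hc i).ne']
          rw [this]
          exact csInf_le hAbdd (Set.mem_insert _ _)
        · have hd0 : 0 < d s i := lt_of_lt_of_le (hc i) h
          have : g i.succ s = c i / d s i := by
            simp only [hg_def, Fin.cases_succ, max_eq_left h]
          rw [this]
          exact csInf_le hAbdd (Set.mem_insert_of_mem _ ⟨i, hd0, rfl⟩)
    · apply le_csInf hAne
      intro x hx
      rcases hx with hx | ⟨i, hi, rfl⟩
      · subst hx
        exact Finset.inf'_le _ (Finset.mem_univ (0 : Fin (m+1)))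
      · have hd0 : 0 < d s i := hi
        calc Finset.univ.inf' hne (fun k => g k s) ≤ g i.succ s :=
              Finset.inf'_le _ (Finset.mem_univ _)
          _ ≤ c i / d s i := by
              simp only [hg_def, Fin.cases_succ]
              gcongr
              · exact (hc i).le
              · exact le_max_left _ _
  have hgcont : ∀ k, Continuous (g k) := by
    intro k
    induction k using Fin.cases with
    | zero => exact continuous_const
    | succ i =>
      have hdcont : Continuous (fun s => d s i) := by
        apply Continuous.sub _ continuous_const
        exact continuous_finset_sum _ fun j _ => continuous_const.mul (continuous_apply j)
      have hmax : Continuous (fun s => max (d s i) (c i)) :=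
        hdcont.max continuous_const
      simp only [hg_def, Fin.cases_succ]
      exact continuous_const.div hmax fun s =>
        (lt_of_lt_of_le (hc i) (le_max_right _ _)).ne'
  have hαcont : Continuous αstar := by
    have : αstar = fun s => Finset.univ.inf' hne (fun k => g k s) := funext key
    rw [this]
    exact Continuous.finset_inf'_apply hne fun k _ => hgcont k
  exact (hαcont.smul continuous_id).add ((continuous_const.sub hαcont).smul continuous_const)
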